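/- arXiv:math/0312288 — 11 statements merged into one kernel-verified Lean document; each statement's English description precedes it below -/
import Mathlib

section
/- Let P : ℕ → ℕ be a sequence of prime numbers, and let Σ_P denote the P-adic solenoid, i.e., the subgroup of the infinite product (S¹)^ℕ (coordinates indexed by ℕ) consisting of sequences z with z n = (z (n+1))^(P n) for all n, where S¹ is the unit circle in ℂ. For k a positive integer, let h_P^k : Σ_P → Σ_P be the map raising every coordinate to the k-th power. Then h_P^k is a well-defined surjective continuous group homomorphism. -/
/-- The `P`-adic solenoid: sequences on the unit circle with `z n = z (n+1) ^ P n`. -/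
def Solenoid (P : ℕ → ℕ) : Set (ℕ → ℂ) :=
  {z | (∀ n, ‖z n‖ = 1) ∧ ∀ n, z n = z (n + 1) ^ P n}

/-- The coordinatewise `k`-th power map. -/
def hpow (k : ℕ) (z : ℕ → ℂ) : ℕ → ℂ := fun n => z n ^ k

/-- Existence of roots on the unit circle. -/
lemma circle_root (w : ℂ) (hw : ‖w‖ = 1) {m : ℕ} (hm : 0 < m) :
    ∃ u : ℂ, ‖u‖ = 1 ∧ u ^ m = w := by
  obtain ⟨u, hu⟩ := IsAlgClosed.exists_pow_nat_eq w hm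
  refine ⟨u, ?_, hu⟩
  have h1 : ‖u‖ ^ m = 1 := by rw [← norm_pow, hu, hw]
  rcases lt_trichotomy ‖u‖ 1 with h | h | h
  · exact absurd h1 (pow_lt_one₀ (norm_nonneg _) h hm.ne').ne
  · exact h
  · exact absurd h1.symm (one_lt_pow₀ h hm.ne').ne

/-- The coordinatewise `k`-th power map on the `P`-adic solenoid is a well-defined
surjective continuous group homomorphism. -/
theorem stmt_2 (P : ℕ → ℕ) (hP : ∀ n, (P n).Prime) (k : ℕ) (hk : 0 < k) :
    (∀ z ∈ Solenoid P, hpow k z ∈ Solenoid P) ∧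
    (∀ z w : ℕ → ℂ, hpow k (z * w) = hpow k z * hpow k w) ∧
    Continuous (fun z : Solenoid P => hpow k (z : ℕ → ℂ)) ∧
    (∀ y ∈ Solenoid P, ∃ z ∈ Solenoid P, hpow k z = y) := by
  refine ⟨?_, ?_, ?_, ?_⟩
  · rintro z ⟨hz1, hz2⟩
    refine ⟨fun n => by simp [hpow, map_pow, hz1 n], fun n => ?_⟩
    simp only [hpow]
    rw [hz2 n, ← pow_mul, ← pow_mul, Nat.mul_comm]
  · intro z w
    funext n
    simp [hpow, mul_pow]
  · exact continuous_pi fun n =>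
      ((continuous_apply n).comp continuous_subtype_val).pow k
  · rintro y ⟨hy1, hy2⟩
    -- `y n` in terms of later coordinates
    have key : ∀ n m : ℕ, n ≤ m → y n = y m ^ ∏ i ∈ Finset.Ico n m, P i := by
      intro n m hnm
      induction m with
      | zero =>
        interval_cases n
        simp
      | succ m ih =>
        rcases Nat.lt_or_ge n (m + 1) with h | h
        · have hnm' : n ≤ m := Nat.lt_succ_iff.mp h
          rw [ih hnm', hy2 m, ← pow_mul]
          congr 1
          rw [Finset.prod_Ico_succ_top hnm', mul_comm]
        · have : n = m + 1 := le_antisymm hnm h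
          subst this
          simp
    -- the decreasing family of closed sets
    set C : ℕ → Set (ℕ → ℂ) :=
      fun N => {z | z ∈ Solenoid P ∧ ∀ n ≤ N, z n ^ k = y n} with hC
    have hmono : ∀ N, C (N + 1) ⊆ C N := by
      rintro N z ⟨hz, hzk⟩
      exact ⟨hz, fun n hn => hzk n (hn.trans (Nat.le_succ N))⟩
    have hclosed : ∀ N, IsClosed (C N) := by
      intro N
      have h1 : IsClosed {z : ℕ → ℂ | ∀ n, ‖z n‖ = 1} := by
        rw [Set.setOf_forall]
        exact isClosed_iInter fun n =>
          isClosed_eq (continuous_norm.comp (continuous_apply n)) continuous_const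
      have h2 : IsClosed {z : ℕ → ℂ | ∀ n, z n = z (n + 1) ^ P n} := by
        rw [Set.setOf_forall]
        exact isClosed_iInter fun n =>
          isClosed_eq (continuous_apply n) ((continuous_apply (n + 1)).pow (P n))
      have h3 : IsClosed {z : ℕ → ℂ | ∀ n ≤ N, z n ^ k = y n} := by
        have : {z : ℕ → ℂ | ∀ n ≤ N, z n ^ k = y n} =
            ⋂ n ∈ {n | n ≤ N}, {z : ℕ → ℂ | z n ^ k = y n} := by
          ext z; simp [Set.mem_iInter]
        rw [this]
        exact isClosed_biInter fun n _ =>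
          isClosed_eq ((continuous_apply n).pow k) continuous_const
      have : C N = ({z : ℕ → ℂ | ∀ n, ‖z n‖ = 1} ∩
          {z : ℕ → ℂ | ∀ n, z n = z (n + 1) ^ P n}) ∩
          {z : ℕ → ℂ | ∀ n ≤ N, z n ^ k = y n} := by
        ext z
        simp only [hC, Set.mem_setOf_eq, Set.mem_inter_iff, Solenoid]
      rw [this]
      exact ((h1.inter h2).inter h3)
    have hne : ∀ N, (C N).Nonempty := by
      intro N
      -- build a coherent sequence of roots above level N
      have hw : ∃ w : ℕ → ℂ, (∀ j, ‖w j‖ = 1) ∧ w 0 ^ k = y N ∧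
          ∀ j, w (j + 1) ^ P (N + j) = w j := by
        obtain ⟨u0, hu0, hu0k⟩ := circle_root (y N) (hy1 N) hk
        choose f hf1 hf2 using fun (j : ℕ) (w : {u : ℂ // ‖u‖ = 1}) =>
          circle_root w.1 w.2 (hP (N + j)).pos
        let W : ℕ → {u : ℂ // ‖u‖ = 1} := fun j =>
          Nat.rec (motive := fun _ => {u : ℂ // ‖u‖ = 1}) ⟨u0, hu0⟩
            (fun j p => ⟨f j p, hf1 j p⟩) j
        refine ⟨fun j => (W j).1, fun j => (W j).2, hu0k, fun j => hf2 j (W j)⟩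
      obtain ⟨w, hwabs, hwk, hwrel⟩ := hw
      classical
      refine ⟨fun n => if n ≤ N then w 0 ^ ∏ i ∈ Finset.Ico n N, P i else w (n - N),
        ⟨⟨fun n => ?_, fun n => ?_⟩, fun n hn => ?_⟩⟩
      · by_cases h : n ≤ N <;> simp [h, map_pow, norm_pow, hwabs]
      · dsimp only
        rcases Nat.lt_or_ge n N with h | h
        · have h1 : n ≤ N := h.le
          have h2 : n + 1 ≤ N := h
          simp only [if_pos h1, if_pos h2]
          rw [← pow_mul, mul_comm, ← Finset.prod_eq_prod_Ico_succ_bot h]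
        · rcases Nat.eq_or_lt_of_le h with h' | h'
          · subst h'
            rw [if_pos le_rfl, if_neg (by omega), Finset.Ico_self, Finset.prod_empty,
              pow_one]
            have h1 : N + 1 - N = 1 := by omega
            rw [h1]
            simpa using (hwrel 0).symm
          · rw [if_neg (by omega), if_neg (by omega)]
            have h2 : n + 1 - N = (n - N - 1) + 1 + 1 := by omega
            have h3 : n - N = (n - N - 1) + 1 := by omega
            rw [h2, h3, ← hwrel ((n - N - 1) + 1)]
            congr 2
            omega
      · dsimp only
        rw [if_pos hn, ← pow_mul, mul_comm, pow_mul, hwk, ← key n N hn]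
    have hcpt : IsCompact (C 0) := by
      have hpi : IsCompact (Set.pi Set.univ fun _ : ℕ => Metric.sphere (0:ℂ) 1) :=
        isCompact_univ_pi fun _ => isCompact_sphere 0 1
      refine hpi.of_isClosed_subset (hclosed 0) ?_
      rintro z ⟨⟨hz1, _⟩, _⟩
      intro n _
      simp [mem_sphere_zero_iff_norm, hz1 n]
    obtain ⟨z, hz⟩ := IsCompact.nonempty_iInter_of_sequence_nonempty_isCompact_isClosed
      C hmono hne hcpt hclosed
    simp only [Set.mem_iInter] at hz
    refine ⟨z, (hz 0).1, ?_⟩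
    funext n
    exact (hz n).2 n le_rfl
end

section
/- Let P : ℕ → ℕ be a sequence of primes and Σ_P the P-adic solenoid. For every positive integer k, the fiber (h_P^k)⁻¹(e) over the identity e = (1,1,…) has cardinality at most k. -/
/-- There are at most `k` complex `k`-th roots of unity. -/
lemma mk_kroots_le (k : ℕ) (hk : 0 < k) :
    Cardinal.mk {x : ℂ | x ^ k = 1} ≤ (k : Cardinal) := by
  classical
  have hsub : {x : ℂ | x ^ k = 1} ⊆ ((Polynomial.nthRoots k (1 : ℂ)).toFinset : Set ℂ) := by
    intro x hx
    simp only [Finset.coe_sort_coe, Finset.mem_coe, Multiset.mem_toFinset]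
    rw [Polynomial.mem_nthRoots hk]
    exact hx
  calc Cardinal.mk {x : ℂ | x ^ k = 1}
      ≤ Cardinal.mk (((Polynomial.nthRoots k (1 : ℂ)).toFinset : Set ℂ)) :=
        Cardinal.mk_le_mk_of_subset hsub
    _ = ((Polynomial.nthRoots k (1 : ℂ)).toFinset.card : Cardinal) := Cardinal.mk_coe_finset
    _ ≤ (k : Cardinal) := by
        have h1 : (Polynomial.nthRoots k (1 : ℂ)).toFinset.card ≤ k :=
          le_trans (Multiset.toFinset_card_le _) (Polynomial.card_nthRoots k 1)
        exact_mod_cast Nat.cast_le.mpr h1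

/-- Key rigidity lemma: a compatible sequence of `k`-th roots of unity that equals `1` at a
suitable coordinate `N` is identically `1`. -/
lemma solenoid_key (P : ℕ → ℕ) (hP : ∀ n, (P n).Prime) (k : ℕ) (hk : 0 < k)
    (N : ℕ) (hN : ∀ i, N ≤ i → P i ∣ k → {j | P j = P i}.Infinite)
    (w : ℕ → ℂ) (hwk : ∀ n, w n ^ k = 1) (hrec : ∀ n, w n = w (n + 1) ^ P n)
    (hwN : w N = 1) : ∀ m, w m = 1 := by
  have hak : ∀ n, orderOf (w n) ∣ k := fun n => orderOf_dvd_of_pow_eq_one (hwk n)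
  -- the basic recursion for orders
  have hrel : ∀ n, orderOf (w (n + 1)) =
      orderOf (w n) * Nat.gcd (orderOf (w (n + 1))) (P n) := by
    intro n
    have h1 : orderOf (w n) = orderOf (w (n + 1)) / Nat.gcd (orderOf (w (n + 1))) (P n) := by
      rw [hrec n]
      exact orderOf_pow' _ (hP n).ne_zero
    rw [h1, Nat.div_mul_cancel (Nat.gcd_dvd_left _ _)]
  -- monotonicity of orders
  have hmono : ∀ n n', n ≤ n' → orderOf (w n) ∣ orderOf (w n') := by
    intro n n' h
    induction n' , h using Nat.le_induction with
    | base => exact dvd_rfl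
    | succ n' hn' ih => exact ih.trans (by rw [hrel n']; exact dvd_mul_right _ _)
  -- the main upward step
  have hup : ∀ m, N ≤ m → w m = 1 := by
    intro m hm
    induction m, hm using Nat.le_induction with
    | base => exact hwN
    | succ m hm ih =>
      by_contra hne
      have ha1 : orderOf (w (m + 1)) ≠ 1 := fun h => hne (orderOf_eq_one_iff.mp h)
      have haP : orderOf (w (m + 1)) ∣ P m := by
        apply orderOf_dvd_of_pow_eq_one
        rw [← hrec m]; exact ih
      set p := P m with hpdef
      have hp : p.Prime := hP m
      have hap : orderOf (w (m + 1)) = p := ((Nat.dvd_prime hp).mp haP).resolve_left ha1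
      have hpk : p ∣ k := hap ▸ hak (m + 1)
      have hSinf : {j | P j = p}.Infinite := hN m hm hpk
      -- growth claim
      have grow : ∀ e : ℕ, ∃ n, m + 1 ≤ n ∧ p ^ (1 + e) ∣ orderOf (w n) := by
        intro e
        induction e with
        | zero => exact ⟨m + 1, le_rfl, by rw [pow_one, hap]⟩
        | succ e ihe =>
          obtain ⟨n, hn, hdvd⟩ := ihe
          obtain ⟨j, hjS, hjn⟩ := hSinf.exists_gt n
          have hnj : orderOf (w n) ∣ orderOf (w j) := hmono n j hjn.le
          have hdvdj : p ^ (1 + e) ∣ orderOf (w j) := hdvd.trans hnj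
          have hpj : p ∣ orderOf (w j) :=
            (dvd_pow_self p (n := 1 + e) (by omega)).trans hdvdj
          have hpj1 : p ∣ orderOf (w (j + 1)) := by
            rw [hrel j]
            exact hpj.trans (dvd_mul_right _ _)
          have hgcd : Nat.gcd (orderOf (w (j + 1))) (P j) = p := by
            rw [hjS]
            exact Nat.gcd_eq_right hpj1 |>.symm ▸ (Nat.gcd_eq_right hpj1)
          refine ⟨j + 1, le_trans hn (Nat.le_succ_of_le hjn.le), ?_⟩
          have hpow : (1 : ℕ) + (e + 1) = (1 + e) + 1 := by ring
          rw [hrel j, hgcd, hpow, pow_succ]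
          exact mul_dvd_mul hdvdj dvd_rfl
      obtain ⟨n, -, hdvd⟩ := grow k
      have hle : p ^ (1 + k) ≤ k := Nat.le_of_dvd hk (hdvd.trans (hak n))
      have hlt : k < p ^ (1 + k) := by
        calc k < 2 ^ k := Nat.lt_two_pow_self
          _ ≤ 2 ^ (1 + k) := Nat.pow_le_pow_right (by norm_num) (by omega)
          _ ≤ p ^ (1 + k) := Nat.pow_le_pow_left hp.two_le _
      omega
  -- the downward part
  intro m
  rcases le_or_gt N m with h | h
  · exact hup m h
  · -- m < N : descend from N
    have : ∀ d, d ≤ N → w (N - d) = 1 := by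
      intro d
      induction d with
      | zero => intro _; simpa using hwN
      | succ d ihd =>
        intro hd
        have h1 : N - d = (N - (d + 1)) + 1 := by omega
        have := ihd (by omega)
        rw [h1] at this
        rw [hrec (N - (d + 1)), this, one_pow]
    have h2 := this (N - m) (by omega)
    rwa [Nat.sub_sub_self h.le] at h2

/-- The fiber of the coordinatewise `k`-th power map over the identity
has cardinality at most `k`. -/
theorem stmt_3 (P : ℕ → ℕ) (hP : ∀ n, (P n).Prime) (k : ℕ) (hk : 0 < k) :
    Cardinal.mk {z : ℕ → ℂ // z ∈ Solenoid P ∧ hpow k z = 1} ≤ (k : Cardinal) := by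
  classical
  -- choose N beyond all occurrences of primes dividing k that occur only finitely often
  have hNex : ∃ N : ℕ, ∀ i, N ≤ i → P i ∣ k → {j | P j = P i}.Infinite := by
    set N := k.primeFactors.sup
      (fun p => if h : ({j | P j = p}).Finite then h.toFinset.sup id + 1 else 0) with hNdef
    refine ⟨N, fun i hi hdvd => ?_⟩
    by_contra hfin
    rw [Set.not_infinite] at hfin
    have hmem : P i ∈ k.primeFactors :=
      Nat.mem_primeFactors.mpr ⟨hP i, hdvd, hk.ne'⟩
    have hle : (if h : ({j | P j = P i}).Finite then h.toFinset.sup id + 1 else 0) ≤ N := by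
      rw [hNdef]
      exact Finset.le_sup (f := fun p => if h : ({j | P j = p}).Finite
        then h.toFinset.sup id + 1 else 0) hmem
    rw [dif_pos hfin] at hle
    have hiin : i ∈ hfin.toFinset := by simp
    have : i ≤ hfin.toFinset.sup id := Finset.le_sup (f := id) hiin
    omega
  obtain ⟨N, hN⟩ := hNex
  -- the evaluation-at-N map into the k-th roots of unity is injective on the fiber
  have key : ∀ z w : {z : ℕ → ℂ // z ∈ Solenoid P ∧ hpow k z = 1},
      (z : ℕ → ℂ) N = (w : ℕ → ℂ) N → z = w := by
    rintro ⟨z, ⟨hz1, hz2⟩, hzk⟩ ⟨v, ⟨hv1, hv2⟩, hvk⟩ hzw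
    simp only at hzw
    have hvne : ∀ n, v n ≠ 0 := by
      intro n h
      have := hv1 n
      rw [h] at this
      simp at this
    set u : ℕ → ℂ := fun n => z n / v n with hu
    have huk : ∀ n, u n ^ k = 1 := by
      intro n
      have h1 : z n ^ k = 1 := congrFun hzk n
      have h2 : v n ^ k = 1 := congrFun hvk n
      simp only [hu, div_pow, h1, h2, div_one]
    have hurec : ∀ n, u n = u (n + 1) ^ P n := by
      intro n
      simp only [hu, div_pow, ← hz2 n, ← hv2 n]
    have huN : u N = 1 := by
      show z N / v N = 1
      rw [hzw]
      exact div_self (hvne N)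
    have := solenoid_key P hP k hk N hN u huk hurec huN
    have hzv : ∀ n, z n = v n := by
      intro n
      have h : z n / v n = 1 := this n
      rwa [div_eq_one_iff_eq (hvne n)] at h
    exact Subtype.ext (funext hzv)
  -- conclude via the injection into the k-th roots of unity
  have hinj : Function.Injective
      (fun z : {z : ℕ → ℂ // z ∈ Solenoid P ∧ hpow k z = 1} =>
        (⟨(z : ℕ → ℂ) N, congrFun z.2.2 N⟩ : {x : ℂ | x ^ k = 1})) := by
    intro z w h
    exact key z w (congrArg Subtype.val h)
  calc Cardinal.mk {z : ℕ → ℂ // z ∈ Solenoid P ∧ hpow k z = 1}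
      ≤ Cardinal.mk {x : ℂ | x ^ k = 1} := Cardinal.mk_le_of_injective hinj
    _ ≤ (k : Cardinal) := mk_kroots_le k hk
end

section
/- Let P : ℕ → ℕ be a sequence of primes and let k be a prime that occurs infinitely often in P (i.e., {n : P n = k} is infinite). Then the kernel of the coordinatewise k-th power map h_P^k : Σ_P → Σ_P is trivial: if z ∈ Σ_P satisfies (z n)^k = 1 for all n, then z n = 1 for all n. -/
/-- If the prime `k` occurs infinitely often in `P`, the kernel of the
coordinatewise `k`-th power map on the solenoid is trivial. -/
theorem stmt_4 (P : ℕ → ℕ) (hP : ∀ n, (P n).Prime) (k : ℕ) (hk : k.Prime)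
    (hinf : {n | P n = k}.Infinite) :
    ∀ z ∈ Solenoid P, (∀ n, z n ^ k = 1) → ∀ n, z n = 1 := by
  intro z hz hker n
  obtain ⟨_, hrec⟩ := hz
  have key : ∀ j, z n = z (n + j) ^ ∏ i ∈ Finset.range j, P (n + i) := by
    intro j
    induction j with
    | zero => simp
    | succ j ih =>
      rw [ih, hrec (n + j), Finset.prod_range_succ, ← pow_mul, mul_comm,
        ← Nat.add_assoc]
  obtain ⟨m, hm, hnm⟩ := hinf.exists_gt n
  have hzm : z m = 1 := by
    rw [hrec m, hm, hker (m + 1)]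
  have := key (m - n)
  rw [Nat.add_sub_cancel' hnm.le, hzm, one_pow] at this
  exact this
end

section
/- Let P : ℕ → ℕ be a sequence of primes and let k be a prime occurring infinitely often in P. Then h_P^k : Σ_P → Σ_P is a bijection (indeed a topological group automorphism of the compact group Σ_P). -/
lemma solenoid_tele {P : ℕ → ℕ} {z : ℕ → ℂ} (hz : z ∈ Solenoid P) :
    ∀ n m, n ≤ m → z n = z m ^ (∏ i ∈ Finset.Ico n m, P i) := by
  intro n m hnm
  induction m, hnm using Nat.le_induction with
  | base => simp
  | succ m hm ih =>
    rw [ih, hz.2 m, ← pow_mul, Finset.prod_Ico_succ_top hm, mul_comm]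

lemma hpow_mapsTo {P : ℕ → ℕ} (k : ℕ) :
    Set.MapsTo (hpow k) (Solenoid P) (Solenoid P) := by
  intro z hz
  refine ⟨fun n => ?_, fun n => ?_⟩
  · simp [hpow, map_pow, hz.1 n]
  · simp only [hpow]
    rw [hz.2 n, ← pow_mul, ← pow_mul, mul_comm]

lemma hpow_injOn {P : ℕ → ℕ} {k : ℕ} (hinf : {n | P n = k}.Infinite) :
    Set.InjOn (hpow k) (Solenoid P) := by
  intro z hz w hw h
  funext n
  obtain ⟨m, hm, hnm⟩ := hinf.exists_gt n
  have h1 := solenoid_tele hz n (m + 1) (by omega)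
  have h2 := solenoid_tele hw n (m + 1) (by omega)
  rw [Finset.prod_Ico_succ_top (by omega : n ≤ m), hm] at h1 h2
  have hk : z (m + 1) ^ k = w (m + 1) ^ k := congrFun h (m + 1)
  rw [h1, h2, mul_comm, pow_mul, pow_mul, hk]

lemma hpow_surjOn {P : ℕ → ℕ} {k : ℕ} (hinf : {n | P n = k}.Infinite) :
    Set.SurjOn (hpow k) (Solenoid P) (Solenoid P) := by
  intro w hw
  have hex : ∀ n, ∃ m, n ≤ m ∧ P m = k := by
    intro n
    obtain ⟨m, hm, hnm⟩ := hinf.exists_gt n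
    exact ⟨m, hnm.le, hm⟩
  classical
  set μ : ℕ → ℕ := fun n => Nat.find (hex n) with hμ
  have hμ1 : ∀ n, n ≤ μ n := fun n => (Nat.find_spec (hex n)).1
  have hμ2 : ∀ n, P (μ n) = k := fun n => (Nat.find_spec (hex n)).2
  have hμ3 : ∀ n j, n ≤ j → P j = k → μ n ≤ j := fun n j h1 h2 =>
    Nat.find_min' (hex n) ⟨h1, h2⟩
  set z : ℕ → ℂ := fun n => w (μ n + 1) ^ (∏ i ∈ Finset.Ico n (μ n), P i) with hzdef
  have hzk : ∀ n, z n ^ k = w n := by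
    intro n
    have ht := solenoid_tele hw n (μ n + 1) (by have := hμ1 n; omega)
    simp only [hzdef]
    rw [ht, ← pow_mul, Finset.prod_Ico_succ_top (hμ1 n), hμ2 n]
  have hzS : z ∈ Solenoid P := by
    constructor
    · intro n
      simp [hzdef, map_pow, hw.1]
    · intro n
      by_cases h : P n = k
      · have h0 : μ n = n := le_antisymm (hμ3 n n le_rfl h) (hμ1 n)
        rw [h, hzk (n + 1)]
        simp [hzdef, h0]
      · have hne : μ n ≠ n := fun he => h (he ▸ hμ2 n)
        have h1 : μ n = μ (n + 1) := by
          have ha : μ (n + 1) ≤ μ n :=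
            hμ3 (n + 1) (μ n) (by have := hμ1 n; omega) (hμ2 n)
          have hb : μ n ≤ μ (n + 1) :=
            hμ3 n (μ (n + 1)) (by have := hμ1 (n + 1); omega) (hμ2 (n + 1))
          omega
        have hlt : n < μ n := by have := hμ1 n; omega
        simp only [hzdef]
        rw [← h1, ← pow_mul, Finset.prod_eq_prod_Ico_succ_bot hlt, mul_comm (P n)]
  exact ⟨z, hzS, funext fun n => hzk n⟩

/-- If the prime `k` occurs infinitely often in `P`, then the coordinatewise
`k`-th power map is a bijection of the solenoid onto itself, indeed a
topological group automorphism. -/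
theorem stmt_5 (P : ℕ → ℕ) (hP : ∀ n, (P n).Prime) (k : ℕ) (hk : k.Prime)
    (hinf : {n | P n = k}.Infinite) :
    Set.BijOn (hpow k) (Solenoid P) (Solenoid P) ∧
    (∀ z w : ℕ → ℂ, hpow k (z * w) = hpow k z * hpow k w) ∧
    ∃ e : Solenoid P ≃ₜ Solenoid P,
      ∀ z : Solenoid P, (e z : ℕ → ℂ) = hpow k (z : ℕ → ℂ) := by
  classical
  have hbij : Set.BijOn (hpow k) (Solenoid P) (Solenoid P) :=
    ⟨hpow_mapsTo k, hpow_injOn hinf, hpow_surjOn hinf⟩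
  refine ⟨hbij, ?_, ?_⟩
  · intro z w
    funext n
    simp [hpow, mul_pow]
  · have hclosed : IsClosed (Solenoid P) := by
      have heq : Solenoid P =
          (⋂ n, {z : ℕ → ℂ | ‖z n‖ = 1}) ∩
          ⋂ n, {z : ℕ → ℂ | z n = z (n + 1) ^ P n} := by
        ext z
        simp [Solenoid, Set.mem_iInter]
      rw [heq]
      apply IsClosed.inter
      · exact isClosed_iInter fun n =>
          isClosed_eq (continuous_norm.comp (continuous_apply n)) continuous_const
      · exact isClosed_iInter fun n =>
          isClosed_eq (continuous_apply n) ((continuous_apply (n + 1)).pow _)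
    have hsub : Solenoid P ⊆ Set.pi Set.univ (fun _ : ℕ => Metric.sphere (0 : ℂ) 1) := by
      intro z hz n _
      simpa [mem_sphere_zero_iff_norm] using hz.1 n
    have hcomp : IsCompact (Solenoid P) :=
      (isCompact_univ_pi fun _ => isCompact_sphere 0 1).of_isClosed_subset hclosed hsub
    haveI : CompactSpace (Solenoid P) := isCompact_iff_compactSpace.mp hcomp
    let f : Solenoid P → Solenoid P := fun z => ⟨hpow k z, hbij.mapsTo z.2⟩
    have hfc : Continuous f :=
      Continuous.subtype_mk
        (continuous_pi fun n =>
          ((continuous_apply n).comp continuous_subtype_val).pow k) _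
    have hfb : Function.Bijective f := by
      constructor
      · intro z w h
        exact Subtype.ext (hbij.injOn z.2 w.2 (congrArg Subtype.val h))
      · intro w
        obtain ⟨z, hz, hzw⟩ := hbij.surjOn w.2
        exact ⟨⟨z, hz⟩, Subtype.ext hzw⟩
    exact ⟨Continuous.homeoOfEquivCompactToT2 (f := Equiv.ofBijective f hfb) hfc,
      fun z => rfl⟩
end

section
/- Let P be a sequence of primes, k a positive integer all of whose prime divisors occur infinitely often in P. Then the coordinatewise k-th power map h_P^k on the solenoid Σ_P is injective. -/
lemma chain_pow (P : ℕ → ℕ) (u : ℕ → ℂ) (hu : ∀ i, u i = u (i + 1) ^ P i) :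
    ∀ n m, n ≤ m → u n = u m ^ (∏ i ∈ Finset.Ico n m, P i) := by
  intro n m hnm
  induction m, hnm using Nat.le_induction with
  | base => simp
  | succ m hm ih =>
      rw [Finset.prod_Ico_succ_top hm, pow_mul', ← hu m]; exact ih

lemma kill_roots (P : ℕ → ℕ) (k : ℕ) (hk : 0 < k)
    (hdiv : ∀ p : ℕ, p.Prime → p ∣ k → {n | P n = p}.Infinite)
    (u : ℕ → ℂ) (hu : ∀ i, u i = u (i + 1) ^ P i)
    (hroot : ∀ i, u i ^ k = 1) : ∀ i, u i = 1 := by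
  induction k using Nat.strong_induction_on with
  | _ k ih =>
    rcases eq_or_ne k 1 with rfl | hne
    · simpa using hroot
    · have hk2 : 2 ≤ k := (Nat.two_le_iff k).2 ⟨hk.ne', hne⟩
      set p := k.minFac with hp
      have hpp : p.Prime := Nat.minFac_prime hne
      have hpk : p ∣ k := Nat.minFac_dvd k
      have hlt : k / p < k := Nat.div_lt_self hk hpp.one_lt
      have hpos : 0 < k / p := Nat.div_pos (Nat.minFac_le hk) hpp.pos
      apply ih (k / p) hlt hpos
      · intro q hq hqk
        exact hdiv q hq (hqk.trans (Nat.div_dvd_of_dvd hpk))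
      · intro i
        obtain ⟨m, hm, him⟩ := ((hdiv p hpp hpk).exists_gt i)
        have hchain := chain_pow P u hu i (m + 1) (by omega)
        have hmem : m ∈ Finset.Ico i (m + 1) := by
          simp [Finset.mem_Ico]; omega
        obtain ⟨c, hc⟩ : p ∣ ∏ j ∈ Finset.Ico i (m + 1), P j := by
          rw [← hm]; exact Finset.dvd_prod_of_mem _ hmem
        rw [hchain, hc, ← pow_mul]
        have : p * c * (k / p) = k * c := by
          rw [mul_comm p c, mul_assoc, Nat.mul_div_cancel' hpk, mul_comm]
        rw [this, pow_mul, hroot (m + 1), one_pow]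

/-- If every prime divisor of `k` occurs infinitely often in `P`, then the
coordinatewise `k`-th power map is injective on the solenoid. -/
theorem stmt_6 (P : ℕ → ℕ) (hP : ∀ n, (P n).Prime) (k : ℕ) (hk : 0 < k)
    (hdiv : ∀ p : ℕ, p.Prime → p ∣ k → {n | P n = p}.Infinite) :
    Set.InjOn (hpow k) (Solenoid P) := by
  intro z hz w hw h
  have hwne : ∀ i, w i ≠ 0 := by
    intro i hi
    have := hw.1 i
    rw [hi] at this; simp at this
  set u : ℕ → ℂ := fun i => z i / w i with hu
  have hu1 : ∀ i, u i = u (i + 1) ^ P i := by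
    intro i
    simp only [hu, div_pow, ← hz.2 i, ← hw.2 i]
  have hroot : ∀ i, u i ^ k = 1 := by
    intro i
    have hi : z i ^ k = w i ^ k := congrFun h i
    simp only [hu, div_pow, hi]
    exact div_self (pow_ne_zero _ (hwne i))
  have hres := kill_roots P k hk hdiv u hu1 hroot
  funext i
  have h1 : z i / w i = 1 := hres i
  exact (div_eq_one_iff_eq (hwne i)).mp h1
end

section
/- Let P : ℕ → ℕ be a sequence of primes and k a prime such that k ≠ P n for all n. Then the kernel of h_P^k : Σ_P → Σ_P has exactly k elements. -/
/-- The candidate inverse exponent mod `k`. -/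
def auxInv (k p : ℕ) : ℕ := ((p : ZMod k)⁻¹).val

lemma aux_key {k p : ℕ} (hk : k.Prime) (hp : p.Prime) (hne : p ≠ k) :
    ∃ m, auxInv k p * p = 1 + m * k := by
  haveI : Fact k.Prime := ⟨hk⟩
  have hp0 : (p : ZMod k) ≠ 0 := by
    rw [Ne, ZMod.natCast_eq_zero_iff]
    intro h
    exact hne ((Nat.prime_dvd_prime_iff_eq hk hp).mp h).symm
  have h1 : ((auxInv k p * p : ℕ) : ZMod k) = ((1 : ℕ) : ZMod k) := by
    push_cast [auxInv, ZMod.natCast_val, ZMod.cast_id]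
    rw [inv_mul_cancel₀ hp0]
  have h2 : auxInv k p * p ≡ 1 [MOD k] := (ZMod.natCast_eq_natCast_iff _ _ _).mp h1
  have hmod : (auxInv k p * p) % k = 1 := by
    have := h2.symm
    unfold Nat.ModEq at this
    rw [Nat.one_mod_eq_one.mpr hk.one_lt.ne'] at this
    omega
  obtain ⟨q, hq⟩ : ∃ q, auxInv k p * p = k * q + 1 :=
    ⟨_, by rw [← hmod]; exact (Nat.div_add_mod _ _).symm⟩
  exact ⟨q, by rw [hq]; ring⟩

/-- Recursive lift of a `k`-th root of unity to a sequence in the solenoid. -/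
def kerSeq (P : ℕ → ℕ) (k : ℕ) (x : ℂ) : ℕ → ℂ
  | 0 => x
  | n + 1 => kerSeq P k x n ^ auxInv k (P n)

/-- If the prime `k` never occurs in `P`, the kernel of the coordinatewise
`k`-th power map has exactly `k` elements. -/
theorem stmt_8 (P : ℕ → ℕ) (hP : ∀ n, (P n).Prime) (k : ℕ) (hk : k.Prime)
    (hne : ∀ n, P n ≠ k) :
    Nat.card {z : ℕ → ℂ // z ∈ Solenoid P ∧ ∀ n, z n ^ k = 1} = k := by
  have key : ∀ n, ∃ m, auxInv k (P n) * P n = 1 + m * k := fun n =>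
    aux_key hk (hP n) (hne n)
  -- pow lemma
  have pow_fix : ∀ (z : ℂ), z ^ k = 1 → ∀ n, (z ^ auxInv k (P n)) ^ P n = z := by
    intro z hz n
    obtain ⟨m, hm⟩ := key n
    rw [← pow_mul, hm, pow_add, mul_comm m k, pow_mul, hz, one_pow, mul_one, pow_one]
  have f_mem : ∀ x : ℂ, x ^ k = 1 →
      (kerSeq P k x ∈ Solenoid P ∧ ∀ n, kerSeq P k x n ^ k = 1) := by
    intro x hx
    have hroot : ∀ n, kerSeq P k x n ^ k = 1 := by
      intro n
      induction n with
      | zero => exact hx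
      | succ n ih => rw [kerSeq, ← pow_mul, mul_comm, pow_mul, ih, one_pow]
    refine ⟨⟨fun n => ?_, fun n => ?_⟩, hroot⟩
    · have h1 : ‖kerSeq P k x n‖ ^ k = 1 := by
        rw [← norm_pow, hroot n, norm_one]
      have := (pow_left_inj₀ (norm_nonneg _) zero_le_one hk.ne_zero).mp
        (by rw [h1, one_pow])
      exact this
    · rw [kerSeq]
      exact (pow_fix _ (hroot n) n).symm
  let f : {x : ℂ // x ^ k = 1} → {z : ℕ → ℂ // z ∈ Solenoid P ∧ ∀ n, z n ^ k = 1} :=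
    fun x => ⟨kerSeq P k x.1, f_mem x.1 x.2⟩
  have hbij : Function.Bijective f := by
    constructor
    · intro x y h
      exact Subtype.ext (congrFun (congrArg Subtype.val h) 0)
    · rintro ⟨z, ⟨habs, hrel⟩, hzk⟩
      have hzn : ∀ n, kerSeq P k (z 0) n = z n := by
        intro n
        induction n with
        | zero => rfl
        | succ n ih =>
          show kerSeq P k (z 0) n ^ auxInv k (P n) = z (n + 1)
          rw [ih, hrel n, ← pow_mul, mul_comm, pow_mul]
          exact pow_fix _ (hzk (n + 1)) n
      exact ⟨⟨z 0, hzk 0⟩, Subtype.ext (funext hzn)⟩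
  rw [← Nat.card_eq_of_bijective f hbij]
  have e : {x : ℂ // x ^ k = 1} ≃ (Polynomial.nthRootsFinset k (1 : ℂ) : Finset ℂ) :=
    Equiv.subtypeEquivRight fun x => (Polynomial.mem_nthRootsFinset hk.pos (1 : ℂ)).symm
  rw [Nat.card_congr e, Nat.card_eq_finsetCard,
    (Complex.isPrimitiveRoot_exp k hk.ne_zero).card_nthRootsFinset]
end

section
/- Let P : ℕ → ℕ be a sequence of primes such that gcd(k, P n) = 1 for all n, where k is a positive integer. Then for every k-th root of unity ξ in ℂ there exists a point z ∈ Σ_P with z 0 = ξ and (z n)^k = 1 for all n. Consequently the kernel of h_P^k has at least k elements. -/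
/-- If `k` is coprime to every term of `P`, every `k`-th root of unity extends to a
point of the solenoid all of whose coordinates are `k`-th roots of unity; hence the
kernel of the coordinatewise `k`-th power map has at least `k` elements. -/
theorem stmt_9 (P : ℕ → ℕ) (hP : ∀ n, (P n).Prime) (k : ℕ) (hk : 0 < k)
    (hco : ∀ n, Nat.gcd k (P n) = 1) :
    (∀ ξ : ℂ, ξ ^ k = 1 → ∃ z ∈ Solenoid P, z 0 = ξ ∧ ∀ n, z n ^ k = 1) ∧
    (k : Cardinal) ≤ Cardinal.mk {z : ℕ → ℂ // z ∈ Solenoid P ∧ ∀ n, z n ^ k = 1} := by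
  haveI : NeZero k := ⟨hk.ne'⟩
  have key : ∀ ξ : ℂ, ξ ^ k = 1 → ∃ z ∈ Solenoid P, z 0 = ξ ∧ ∀ n, z n ^ k = 1 := by
    intro ξ hξ
    have habs : ‖ξ‖ = 1 := Complex.norm_eq_one_of_pow_eq_one hξ hk.ne'
    -- inverse of P n mod k
    set b : ℕ → ℕ := fun n => ((P n : ZMod k)⁻¹).val with hbdef
    have hbmod : ∀ n, (P n * b n) % k = 1 % k := by
      intro n
      have h1 : ((P n * b n : ℕ) : ZMod k) = (1 : ℕ) := by
        push_cast
        rw [hbdef]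
        simp only []
        rw [ZMod.natCast_zmod_val]
        exact ZMod.coe_mul_inv_eq_one _ (Nat.Coprime.symm (hco n))
      exact (ZMod.natCast_eq_natCast_iff _ _ _).mp h1
    have hpowmod : ∀ a c : ℕ, a % k = c % k → ξ ^ a = ξ ^ c := by
      intro a c h
      rw [pow_eq_pow_mod a hξ, pow_eq_pow_mod c hξ, h]
    let c : ℕ → ℕ := fun n => Nat.rec 1 (fun m cm => cm * b m) n
    refine ⟨fun n => ξ ^ c n, ⟨?_, ?_⟩, ?_, ?_⟩
    · intro n
      rw [norm_pow, habs, one_pow]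
    · intro n
      rw [← pow_mul]
      have hc1 : c (n + 1) = c n * b n := rfl
      rw [hc1]
      apply hpowmod
      have : (c n * (b n * P n)) % k = (c n * 1) % k :=
        Nat.ModEq.mul_left (c n) (by rw [Nat.mul_comm]; exact hbmod n)
      rw [mul_one] at this
      rw [mul_assoc]
      exact this.symm
    · show ξ ^ c 0 = ξ
      simp [c]
    · intro n
      rw [← pow_mul, mul_comm, pow_mul, hξ, one_pow]
  refine ⟨key, ?_⟩
  set ζ : ℂ := Complex.exp (2 * Real.pi * Complex.I / k) with hζdef
  have hζ : IsPrimitiveRoot ζ k := Complex.isPrimitiveRoot_exp k hk.ne'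
  have hroots : ∀ m : Fin k, (ζ ^ (m : ℕ)) ^ k = 1 := by
    intro m
    rw [← pow_mul, mul_comm, pow_mul, hζ.pow_eq_one, one_pow]
  choose z hz hz0 hzk using fun m : Fin k => key (ζ ^ (m : ℕ)) (hroots m)
  have hinj : Function.Injective
      (fun m : Fin k => (⟨z m, hz m, hzk m⟩ :
        {z : ℕ → ℂ // z ∈ Solenoid P ∧ ∀ n, z n ^ k = 1})) := by
    intro m m' h
    have : z m = z m' := congrArg Subtype.val h
    have h0 : ζ ^ (m : ℕ) = ζ ^ (m' : ℕ) := by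
      rw [← hz0 m, ← hz0 m', this]
    exact Fin.ext (hζ.pow_inj m.isLt m'.isLt h0)
  calc (k : Cardinal) = Cardinal.mk (Fin k) := (Cardinal.mk_fin k).symm
    _ ≤ _ := Cardinal.mk_le_of_injective hinj
end

section
/- For a prime p and a sequence of primes P : ℕ → ℕ, the additive group F_P of P-adic rationals (rationals of the form m/(P 0 · P 1 ⋯ P (n-1)) with m ∈ ℤ, n ∈ ℕ) is p-divisible if and only if p occurs infinitely often in P. -/
/-- The additive group of `P`-adic rationals: the subgroup of `ℚ` generated by
the reciprocals of the partial products of `P`. -/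
def PadicRationals (P : ℕ → ℕ) : AddSubgroup ℚ :=
  AddSubgroup.closure {x : ℚ | ∃ n : ℕ, x = 1 / ∏ i ∈ Finset.range n, (P i : ℚ)}

private def QQ (P : ℕ → ℕ) (n : ℕ) : ℚ := ∏ i ∈ Finset.range n, (P i : ℚ)

private lemma QQ_ne_zero (P : ℕ → ℕ) (hP : ∀ n, (P n).Prime) (n : ℕ) : QQ P n ≠ 0 :=
  Finset.prod_ne_zero_iff.2 fun i _ => Nat.cast_ne_zero.2 (hP i).ne_zero

private lemma QQ_raise (P : ℕ → ℕ) {a b : ℕ} (h : a ≤ b) :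
    QQ P b = QQ P a * ∏ i ∈ Finset.Ico a b, (P i : ℚ) := by
  rw [QQ, QQ, ← Finset.prod_range_mul_prod_Ico _ h]

private lemma cast_raise (P : ℕ → ℕ) (hP : ∀ n, (P n).Prime) {a b : ℕ} (h : a ≤ b) (m : ℤ) :
    (m : ℚ) / QQ P a = ((m * ∏ i ∈ Finset.Ico a b, (P i : ℤ) : ℤ) : ℚ) / QQ P b := by
  have hR : (∏ i ∈ Finset.Ico a b, (P i : ℚ)) ≠ 0 :=
    Finset.prod_ne_zero_iff.2 fun i _ => Nat.cast_ne_zero.2 (hP i).ne_zero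
  have hQa : QQ P a ≠ 0 := Finset.prod_ne_zero_iff.2 fun i _ => Nat.cast_ne_zero.2 (hP i).ne_zero
  rw [QQ_raise P h]
  push_cast
  field_simp

private lemma mem_iff (P : ℕ → ℕ) (hP : ∀ n, (P n).Prime) (x : ℚ) :
    x ∈ PadicRationals P ↔ ∃ (n : ℕ) (m : ℤ), x = (m : ℚ) / QQ P n := by
  constructor
  · intro hx
    refine AddSubgroup.closure_induction ?_ ?_ ?_ ?_ hx
    · rintro y ⟨n, rfl⟩
      exact ⟨n, 1, by norm_num [QQ]⟩
    · exact ⟨0, 0, by norm_num⟩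
    · rintro y z _ _ ⟨n1, m1, rfl⟩ ⟨n2, m2, rfl⟩
      refine ⟨max n1 n2, m1 * ∏ i ∈ Finset.Ico n1 (max n1 n2), (P i : ℤ)
        + m2 * ∏ i ∈ Finset.Ico n2 (max n1 n2), (P i : ℤ), ?_⟩
      rw [cast_raise P hP (le_max_left n1 n2) m1, cast_raise P hP (le_max_right n1 n2) m2]
      push_cast
      ring
    · rintro y _ ⟨n, m, rfl⟩
      exact ⟨n, -m, by push_cast; ring⟩
  · rintro ⟨n, m, rfl⟩
    have h1 : (1 : ℚ) / QQ P n ∈ PadicRationals P := AddSubgroup.subset_closure ⟨n, rfl⟩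
    have := AddSubgroup.zsmul_mem _ h1 m
    simpa [zsmul_eq_mul, div_eq_mul_inv] using this

/-- `F_P` is `p`-divisible iff the prime `p` occurs infinitely often in `P`. -/
theorem stmt_10 (P : ℕ → ℕ) (hP : ∀ n, (P n).Prime) (p : ℕ) (hp : p.Prime) :
    (∀ g ∈ PadicRationals P, ∃ g' ∈ PadicRationals P, (p : ℚ) * g' = g) ↔
      {n | P n = p}.Infinite := by
  constructor
  · intro hdiv
    by_contra hfin
    rw [Set.not_infinite] at hfin
    obtain ⟨N, hN⟩ := hfin.bddAbove
    set M := N + 1 with hM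
    obtain ⟨g', hg', hpg⟩ := hdiv ((1 : ℚ) / QQ P M)
      (AddSubgroup.subset_closure ⟨M, rfl⟩)
    obtain ⟨n, m, rfl⟩ := (mem_iff P hP g').1 hg'
    set n' := max n M with hn'
    rw [cast_raise P hP (le_max_left n M) m] at hpg
    set m' : ℤ := m * ∏ i ∈ Finset.Ico n n', (P i : ℤ) with hm'
    have hQ : QQ P n' = QQ P M * ∏ i ∈ Finset.Ico M n', (P i : ℚ) :=
      QQ_raise P (le_max_right n M)
    have hQM := QQ_ne_zero P hP M
    have hR : (∏ i ∈ Finset.Ico M n', (P i : ℚ)) ≠ 0 :=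
      Finset.prod_ne_zero_iff.2 fun i _ => Nat.cast_ne_zero.2 (hP i).ne_zero
    have key : (p : ℚ) * (m' : ℚ) = ∏ i ∈ Finset.Ico M n', (P i : ℚ) := by
      rw [hQ] at hpg
      field_simp at hpg
      exact hpg
    have key2 : (p : ℤ) * m' = ∏ i ∈ Finset.Ico M n', (P i : ℤ) := by
      exact_mod_cast key
    have hdvd : (p : ℤ) ∣ ∏ i ∈ Finset.Ico M n', (P i : ℤ) := ⟨m', key2.symm⟩
    obtain ⟨i, hi, hdi⟩ := ((Int.prime_iff_natAbs_prime.2 (by simpa using hp)).dvd_finset_prod_iff _).1 hdvd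
    have hdn : p ∣ P i := by exact_mod_cast hdi
    have : P i = p := ((Nat.prime_dvd_prime_iff_eq hp (hP i)).1 hdn).symm
    have hle : i ≤ N := hN this
    have : M ≤ i := (Finset.mem_Ico.1 hi).1
    omega
  · intro hinf g hg
    obtain ⟨n, m, rfl⟩ := (mem_iff P hP g).1 hg
    obtain ⟨k, hk, hnk⟩ := hinf.exists_gt n
    set m' : ℤ := m * ∏ i ∈ Finset.Ico n k, (P i : ℤ) with hm'
    refine ⟨(m' : ℚ) / QQ P (k + 1), (mem_iff P hP _).2 ⟨k + 1, m', rfl⟩, ?_⟩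
    rw [cast_raise P hP hnk.le m, ← hm']
    have hQk := QQ_ne_zero P hP k
    have hQ : QQ P (k + 1) = QQ P k * p := by
      rw [QQ, Finset.prod_range_succ, ← QQ, hk]
    rw [hQ]
    have hp0 : (p : ℚ) ≠ 0 := Nat.cast_ne_zero.2 hp.ne_zero
    field_simp
end

section
/- Let P : ℕ → ℕ be a sequence of primes in which every prime number occurs infinitely often. Let k ≥ 2 and z ∈ Σ_P. If (h_P^k)^m(z) = z for some positive integer m (i.e., z is periodic under the coordinatewise k-th power map), then z = e, the identity of Σ_P. -/
/-- If every prime occurs infinitely often in `P` and `k ≥ 2`, then the identity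
is the only periodic point of the coordinatewise `k`-th power map. -/
theorem stmt_11 (P : ℕ → ℕ) (hP : ∀ n, (P n).Prime)
    (hall : ∀ p : ℕ, p.Prime → {n | P n = p}.Infinite)
    (k : ℕ) (hk : 2 ≤ k) (z : ℕ → ℂ) (hz : z ∈ Solenoid P)
    (m : ℕ) (hm : 1 ≤ m) (hper : (hpow k)^[m] z = z) :
    z = 1 := by
  obtain ⟨habs, hrel⟩ := hz
  have hne : ∀ n, z n ≠ 0 := by
    intro n h
    have := habs n
    rw [h] at this
    simp at this
  -- iterate formula
  have hiter : ∀ j, (hpow k)^[j] z = fun n => z n ^ (k ^ j) := by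
    intro j
    induction j with
    | zero => simp
    | succ j ih =>
      rw [Function.iterate_succ_apply', ih]
      funext n
      simp [hpow, ← pow_mul, pow_succ]
  set N := k ^ m - 1 with hNdef
  have hkm : 2 ≤ k ^ m := le_trans hk (Nat.le_self_pow (by omega) k)
  have hNpos : 0 < N := by omega
  have hN : ∀ n, z n ^ N = 1 := by
    intro n
    have h1 : z n ^ (k ^ m) = z n := by
      conv_rhs => rw [← hper, hiter m]
    have h2 : z n ^ N * z n = 1 * z n := by
      rw [← pow_succ, hNdef, Nat.sub_add_cancel (by omega), h1, one_mul]
    exact mul_right_cancel₀ (hne n) h2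
  -- chain formula
  have hchain : ∀ n j, z n = z (n + j) ^ (∏ i ∈ Finset.Ico n (n + j), P i) := by
    intro n j
    induction j with
    | zero => simp
    | succ j ih =>
      rw [show n + (j + 1) = (n + j) + 1 from rfl,
        Finset.prod_Ico_succ_top (Nat.le_add_right n j)]
      rw [ih, hrel (n + j), ← pow_mul, mul_comm]
  -- divisibility by arbitrary prime powers in the tail products
  have hpp : ∀ p : ℕ, p.Prime → ∀ A n : ℕ,
      ∃ j, p ^ A ∣ ∏ i ∈ Finset.Ico n (n + j), P i := by
    intro p pp A n
    induction A with
    | zero => exact ⟨0, by simp⟩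
    | succ A ih =>
      obtain ⟨j, hj⟩ := ih
      obtain ⟨i, hiP, hilt⟩ := (hall p pp).exists_gt (n + j)
      refine ⟨i + 1 - n, ?_⟩
      have hni : n + (i + 1 - n) = i + 1 := by omega
      rw [hni]
      have hsplit : Finset.Ico n (i + 1) = Finset.Ico n (n + j) ∪ Finset.Ico (n + j) (i + 1) := by
        rw [Finset.Ico_union_Ico_eq_Ico (by omega) (by omega)]
      rw [hsplit, Finset.prod_union (Finset.Ico_disjoint_Ico_consecutive n (n + j) (i + 1)),
        pow_succ]
      refine mul_dvd_mul hj ?_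
      have : P i = p := hiP
      exact this ▸ Finset.dvd_prod_of_mem P (by simp; omega)
  -- main argument
  funext n
  show z n = 1
  have hxord : orderOf (z n) ∣ N := orderOf_dvd_of_pow_eq_one (hN n)
  have hxne : orderOf (z n) ≠ 0 := by
    intro h
    rw [h] at hxord
    omega
  have hone : orderOf (z n) = 1 := by
    rw [Nat.eq_one_iff_not_exists_prime_dvd]
    intro p pp hpdvd
    obtain ⟨j, hjd⟩ := hpp p pp (N.factorization p) n
    set Q := ∏ i ∈ Finset.Ico n (n + j), P i with hQ
    have hQne : Q ≠ 0 := by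
      refine Finset.prod_ne_zero_iff.2 fun i _ => (hP i).pos.ne'
    set w := z (n + j) with hw
    have hword : orderOf w ∣ N := orderOf_dvd_of_pow_eq_one (hN (n + j))
    have hwne : orderOf w ≠ 0 := by
      intro h; rw [h] at hword; omega
    have hx : z n = w ^ Q := hchain n j
    have hxo : orderOf (z n) = orderOf w / Nat.gcd (orderOf w) Q := by
      rw [hx, orderOf_pow' w hQne]
    set a := (orderOf w).factorization p with ha
    have haA : a ≤ N.factorization p := by
      have := (Nat.factorization_le_iff_dvd hwne (by omega)).2 hword
      exact this p
    have hpaQ : p ^ a ∣ Q := dvd_trans (pow_dvd_pow p haA) hjd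
    have hpaw : p ^ a ∣ orderOf w := Nat.ordProj_dvd _ p
    have hpag : p ^ a ∣ Nat.gcd (orderOf w) Q := Nat.dvd_gcd hpaw hpaQ
    have hgd : Nat.gcd (orderOf w) Q ∣ orderOf w := Nat.gcd_dvd_left _ _
    have hkey : p ^ (a + 1) ∣ orderOf w := by
      have h1 : orderOf w / Nat.gcd (orderOf w) Q * Nat.gcd (orderOf w) Q = orderOf w :=
        Nat.div_mul_cancel hgd
      rw [hxo] at hpdvd
      calc p ^ (a + 1) = p * p ^ a := by ring
        _ ∣ (orderOf w / Nat.gcd (orderOf w) Q) * Nat.gcd (orderOf w) Q :=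
            mul_dvd_mul hpdvd hpag
        _ = orderOf w := h1
    have := (Nat.Prime.pow_dvd_iff_le_factorization pp hwne).1 hkey
    omega
  exact orderOf_eq_one_iff.1 hone
end

section
/- Let P : ℕ → ℕ be a sequence of primes, q a prime with q ≠ P j for all j ≥ n₀, and k ≥ 2 with gcd(k, q) = 1. Then for every m ≥ 1 there exists a point ζ ∈ Σ_P whose n₀-th coordinate is any prescribed q^m-th root of unity, such that ζ^(q^m) = e; consequently ζ satisfies (h_P^k)^(q^(m-1)(q-1))(ζ) = ζ, i.e., ζ is a periodic point of h_P^k of period dividing φ(q^m). -/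
lemma pow_mod_eq (x : ℂ) (d a : ℕ) (h : x ^ d = 1) : x ^ a = x ^ (a % d) := by
  conv_lhs => rw [← Nat.div_add_mod a d]
  rw [pow_add, pow_mul, h, one_pow, one_mul]

lemma pow_eq_of_modEq (x : ℂ) (d a b : ℕ) (h : x ^ d = 1) (hab : a ≡ b [MOD d]) :
    x ^ a = x ^ b := by
  rw [pow_mod_eq x d a h, pow_mod_eq x d b h, hab]

lemma hpow_iter (k r : ℕ) (z : ℕ → ℂ) (n : ℕ) : (hpow k)^[r] z n = z n ^ (k ^ r) := by
  induction r generalizing z with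
  | zero => simp
  | succ r ih =>
    rw [Function.iterate_succ_apply, ih, hpow, ← pow_mul, pow_succ']

/-- If the prime `q` does not occur in `P` from index `n₀` on and `gcd(k,q)=1`,
then every `q^m`-th root of unity is the `n₀`-th coordinate of a point `ζ` of the
solenoid with `ζ ^ q^m = e`, and `ζ` is a periodic point of `h_P^k` of period
dividing `φ(q^m) = q^(m-1) * (q-1)`. -/
theorem stmt_13 (P : ℕ → ℕ) (hP : ∀ n, (P n).Prime) (q : ℕ) (hq : q.Prime)
    (n₀ : ℕ) (hqP : ∀ j, n₀ ≤ j → P j ≠ q)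
    (k : ℕ) (hk : 2 ≤ k) (hco : Nat.gcd k q = 1) (m : ℕ) (hm : 1 ≤ m) :
    ∀ ξ : ℂ, ξ ^ (q ^ m) = 1 →
      ∃ ζ ∈ Solenoid P, ζ n₀ = ξ ∧ (∀ n, ζ n ^ (q ^ m) = 1) ∧
        (hpow k)^[q ^ (m - 1) * (q - 1)] ζ = ζ := by
  intro ξ hξ
  set D : ℕ := q ^ m with hD
  have hDpos : 0 < D := pow_pos hq.pos m
  have hφeq : D.totient = q ^ (m - 1) * (q - 1) :=
    Nat.totient_prime_pow hq hm
  set φ : ℕ := D.totient with hφ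
  have hφpos : 0 < φ := Nat.totient_pos.mpr hDpos
  -- the exponent sequence
  set b : ℕ → ℕ := fun n =>
    (∏ j ∈ Finset.Ico n n₀, P j) * (∏ j ∈ Finset.Ico n₀ n, P j) ^ (φ - 1) with hb
  set ζ : ℕ → ℂ := fun n => ξ ^ (b n) with hζ
  have hpow1 : ∀ n, ζ n ^ D = 1 := by
    intro n
    rw [hζ]
    simp only
    rw [← pow_mul, mul_comm, pow_mul, hξ, one_pow]
  refine ⟨ζ, ⟨fun n => Complex.norm_eq_one_of_pow_eq_one (hpow1 n) hDpos.ne', ?_⟩, ?_, hpow1, ?_⟩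
  · -- solenoid relation
    intro n
    rw [hζ]
    simp only [← pow_mul]
    rcases lt_or_ge n n₀ with h | h
    · congr 1
      rw [hb]
      simp only
      rw [Finset.Ico_eq_empty (by omega : ¬ n₀ < n), Finset.Ico_eq_empty (by omega : ¬ n₀ < n + 1)]
      simp only [Finset.prod_empty, one_pow, mul_one]
      rw [Finset.prod_eq_prod_Ico_succ_bot h]
      ring
    · apply pow_eq_of_modEq ξ D _ _ hξ
      rw [hb]
      simp only
      rw [Finset.Ico_eq_empty (by omega : ¬ n < n₀), Finset.Ico_eq_empty (by omega : ¬ n + 1 < n₀)]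
      simp only [Finset.prod_empty, one_mul]
      rw [Finset.prod_Ico_succ_top h, mul_pow, mul_assoc, ← pow_succ,
        (show φ - 1 + 1 = φ by omega)]
      have heuler : P n ^ φ ≡ 1 [MOD D] := by
        apply Nat.ModEq.pow_totient
        exact Nat.Coprime.pow_right m (((Nat.coprime_primes (hP n) hq).mpr (hqP n h)))
      nth_rewrite 1 [← mul_one ((∏ j ∈ Finset.Ico n₀ n, P j) ^ (φ - 1))]
      exact Nat.ModEq.mul_left _ heuler.symm
  · -- coordinate n₀
    rw [hζ, hb]
    simp
  · -- periodicity
    funext n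
    rw [← hφeq, hpow_iter]
    have hkC : k ^ φ ≡ 1 [MOD D] :=
      Nat.ModEq.pow_totient (Nat.Coprime.pow_right m hco)
    calc ζ n ^ k ^ φ = ζ n ^ 1 := pow_eq_of_modEq (ζ n) D _ 1 (hpow1 n) hkC
      _ = ζ n := pow_one _
end

section
/- Let P : ℕ → ℕ be a sequence of primes with S(P) nonempty and finite, and let k ≥ 2 be a positive integer not divisible by some q ∈ S(P). Then the set of periodic points of h_P^k is dense in Σ_P. -/
namespace Sol16

open Finset

lemma hpow_iter (k m : ℕ) (z : ℕ → ℂ) : (hpow k)^[m] z = fun n => z n ^ (k ^ m) := by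
  induction m generalizing z with
  | zero => simp
  | succ m ih =>
      rw [Function.iterate_succ_apply, ih]
      funext n
      show (z n ^ k) ^ k ^ m = z n ^ k ^ (m + 1)
      rw [← pow_mul, ← pow_succ']

lemma abs_pow_sub_pow_le (a b : ℂ) (ha : ‖a‖ = 1) (hb : ‖b‖ = 1) :
    ∀ M : ℕ, ‖a ^ M - b ^ M‖ ≤ M * ‖a - b‖ := by
  intro M
  induction M with
  | zero => simp
  | succ M ih =>
      have key : a ^ (M+1) - b ^ (M+1) = a * (a ^ M - b ^ M) + (a - b) * b ^ M := by ring
      calc ‖a ^ (M+1) - b ^ (M+1)‖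
          ≤ ‖a * (a ^ M - b ^ M)‖ + ‖(a - b) * b ^ M‖ := by
            rw [key]; exact norm_add_le _ _
        _ = ‖a ^ M - b ^ M‖ + ‖a - b‖ := by
            rw [norm_mul, norm_mul, norm_pow, ha, hb]; ring
        _ ≤ M * ‖a - b‖ + ‖a - b‖ := by linarith
        _ = (M+1 : ℕ) * ‖a - b‖ := by push_cast; ring

lemma exp_eq_of_sub_eq (r s : ℝ) (t : ℤ) (h : r - s = t * (2 * Real.pi)) :
    Complex.exp (r * Complex.I) = Complex.exp (s * Complex.I) := by
  have hr : r = s + t * (2 * Real.pi) := by linarith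
  have : (r : ℂ) * Complex.I = (s : ℂ) * Complex.I + (t : ℂ) * (2 * (Real.pi : ℂ) * Complex.I) := by
    rw [hr]; push_cast; ring
  rw [this, Complex.exp_add, Complex.exp_int_mul_two_pi_mul_I, mul_one]

lemma sol_pow {P : ℕ → ℕ} {z : ℕ → ℂ} (hz : ∀ n, z n = z (n+1) ^ P n) :
    ∀ a b : ℕ, a ≤ b → z a = z b ^ (∏ j ∈ Finset.Ico a b, P j) := by
  intro a b hab
  induction b, hab using Nat.le_induction with
  | base => simp
  | succ b hab ih =>
      rw [Finset.prod_Ico_succ_top hab, mul_comm, pow_mul, ← hz b]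
      exact ih

/-- The sequence of rational "angles" (as multiples of `2π`) from index `N` on. -/
def Th (P : ℕ → ℕ) (q N E J : ℕ) (b : ℤ) : ℕ → ℚ
  | 0 => (b : ℚ) / (q : ℚ) ^ J
  | i + 1 => if P (N + i) = q then Th P q N E J b i / q
      else ((P (N + i)) ^ (E - 1) : ℕ) * Th P q N E J b i

/-- The full sequence of rational angles. -/
def θf (P : ℕ → ℕ) (q N E J : ℕ) (b : ℤ) (n : ℕ) : ℚ :=
  if n < N then ((∏ j ∈ Finset.Ico n N, P j : ℕ) : ℚ) * Th P q N E J b 0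
  else Th P q N E J b (n - N)

/-- Number of occurrences of `q` in `P` at positions `N, …, N+i-1`. -/
def dc (P : ℕ → ℕ) (q N : ℕ) (i : ℕ) : ℕ :=
  ((Finset.range i).filter (fun j => P (N + j) = q)).card

lemma θf_eq_of_le {P : ℕ → ℕ} {q N E J : ℕ} {b : ℤ} {n : ℕ} (h : n ≤ N) :
    θf P q N E J b n = ((∏ j ∈ Finset.Ico n N, P j : ℕ) : ℚ) * Th P q N E J b 0 := by
  rcases lt_or_eq_of_le h with h | rfl
  · rw [θf, if_pos h]
  · rw [θf, if_neg (lt_irrefl _)]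
    simp

lemma dc_le {P : ℕ → ℕ} {q N : ℕ} (hqfin : {n | P n = q}.Finite) (i : ℕ) :
    dc P q N i ≤ hqfin.toFinset.card := by
  apply Finset.card_le_card_of_injOn (fun j => N + j)
  · intro j hj
    simp only [Finset.mem_coe, Finset.mem_filter, Finset.mem_range] at hj
    simp [Set.Finite.mem_toFinset, hj.2]
  · intro a _ b _ h
    exact Nat.add_left_cancel h

lemma Th_inv {P : ℕ → ℕ} {q N E J : ℕ} {b : ℤ} (hq : 2 ≤ q) (i : ℕ) :
    ∃ t : ℤ, Th P q N E J b i * (q : ℚ) ^ (J + dc P q N i) = t := by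
  have hq0 : (q : ℚ) ≠ 0 := by positivity
  induction i with
  | zero =>
      refine ⟨b, ?_⟩
      simp only [Th, dc, Finset.range_zero, Finset.filter_empty, Finset.card_empty, Nat.add_zero]
      field_simp
  | succ i ih =>
      obtain ⟨t, ht⟩ := ih
      by_cases h : P (N + i) = q
      · have hni : i ∉ Finset.filter (fun j => P (N + j) = q) (Finset.range i) := by simp
        have hdc : dc P q N (i+1) = dc P q N i + 1 := by
          simp only [dc, Finset.range_add_one, Finset.filter_insert, if_pos h,
            Finset.card_insert_of_notMem hni]
        refine ⟨t, ?_⟩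
        rw [hdc, Th, if_pos h, ← ht]
        rw [show J + (dc P q N i + 1) = (J + dc P q N i) + 1 by omega, pow_succ]
        field_simp
      · have hdc : dc P q N (i+1) = dc P q N i := by
          simp only [dc, Finset.range_add_one, Finset.filter_insert, if_neg h]
        refine ⟨((P (N + i)) ^ (E - 1) : ℕ) * t, ?_⟩
        rw [hdc, Th, if_neg h]
        push_cast
        rw [mul_assoc, ht]

lemma Th_int {P : ℕ → ℕ} {q N E J c : ℕ} {b : ℤ} (hq : 2 ≤ q)
    (hc : ∀ i, dc P q N i ≤ c) (i : ℕ) :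
    ∃ t : ℤ, Th P q N E J b i * (q : ℚ) ^ (J + c) = t := by
  obtain ⟨t, ht⟩ := Th_inv (E := E) (b := b) hq i
  refine ⟨t * (q : ℤ) ^ (c - dc P q N i), ?_⟩
  have : J + c = (J + dc P q N i) + (c - dc P q N i) := by have := hc i; omega
  rw [this, pow_add, ← mul_assoc, ht]
  push_cast
  ring

lemma θf_int {P : ℕ → ℕ} {q N E J c : ℕ} {b : ℤ} (hq : 2 ≤ q)
    (hc : ∀ i, dc P q N i ≤ c) (n : ℕ) :
    ∃ t : ℤ, θf P q N E J b n * (q : ℚ) ^ (J + c) = t := by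
  by_cases h : n < N
  · obtain ⟨t, ht⟩ := Th_int (E := E) (J := J) (b := b) hq hc 0
    refine ⟨(∏ j ∈ Finset.Ico n N, P j : ℕ) * t, ?_⟩
    rw [θf, if_pos h]
    push_cast
    rw [mul_assoc, ht]
  · obtain ⟨t, ht⟩ := Th_int (E := E) (J := J) (b := b) hq hc (n - N)
    exact ⟨t, by rw [θf, if_neg h]; exact ht⟩

lemma θf_rel {P : ℕ → ℕ} {q N E J c : ℕ} {b : ℤ} (hP : ∀ n, (P n).Prime)
    (hqp : q.Prime) (hE : E = Nat.totient (q ^ (J + c))) (hE1 : 1 ≤ E)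
    (hc : ∀ i, dc P q N i ≤ c) (n : ℕ) :
    ∃ t : ℤ, (P n : ℚ) * θf P q N E J b (n+1) - θf P q N E J b n = t := by
  by_cases h : n < N
  · refine ⟨0, ?_⟩
    rw [θf_eq_of_le (le_of_lt h), θf_eq_of_le (h : n + 1 ≤ N),
      Finset.prod_eq_prod_Ico_succ_bot h P]
    push_cast
    ring
  · have hn : N ≤ n := by omega
    have h1 : ¬ (n < N) := h
    have h2 : ¬ (n + 1 < N) := by omega
    have hsub : n + 1 - N = (n - N) + 1 := by omega
    have hPn : P (N + (n - N)) = P n := by congr 1; omega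
    simp only [θf, hsub]
    rw [if_neg h2, if_neg h1, Th]
    by_cases hcase : P (N + (n - N)) = q
    · rw [if_pos hcase]
      refine ⟨0, ?_⟩
      have hqQ : (q : ℚ) ≠ 0 := by
        have := hqp.pos; positivity
      rw [← hPn, hcase]
      push_cast
      field_simp
      ring
    · rw [if_neg hcase]
      -- Euler's theorem: q^(J+c) ∣ P n ^ E - 1
      have hPnq : P n ≠ q := by rwa [hPn] at hcase
      have hco : (P n).Coprime (q ^ (J + c)) :=
        (Nat.Coprime.pow_right _ ((Nat.coprime_primes (hP n) hqp).mpr hPnq))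
      have heuler : (P n) ^ E ≡ 1 [MOD q ^ (J + c)] := by
        rw [hE]; exact Nat.ModEq.pow_totient hco
      obtain ⟨u, hu⟩ := (Nat.modEq_iff_dvd).mp heuler
      obtain ⟨t0, ht0⟩ := Th_int (E := E) (J := J) (b := b) hqp.two_le hc (n - N)
      refine ⟨-u * t0, ?_⟩
      have hpow : (P n : ℚ) * ((P n : ℚ) ^ (E - 1)) = (P n : ℚ) ^ E := by
        rw [← pow_succ']
        congr 1
        omega
      have huQ : (1 : ℚ) - (P n : ℚ) ^ E = (q : ℚ) ^ (J + c) * u := by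
        have : ((1 : ℤ) - (P n : ℤ) ^ E) = ((q : ℤ) ^ (J + c)) * u := by
          push_cast at hu ⊢; linarith
        exact_mod_cast congrArg (fun x : ℤ => (x : ℚ)) this
      push_cast
      rw [hPn]
      set Θ : ℚ := Th P q N E J b (n - N)
      have : (P n : ℚ) * ((P n : ℚ) ^ (E - 1) * Θ) - Θ = ((P n : ℚ) ^ E - 1) * Θ := by
        rw [← mul_assoc, hpow]; ring
      rw [this]
      have : ((P n : ℚ) ^ E - 1) = -((q : ℚ) ^ (J + c) * u) := by linarith
      rw [this]
      push_cast
      calc -((q : ℚ) ^ (J + c) * u) * Θ = -(u : ℚ) * (Θ * (q : ℚ) ^ (J + c)) := by ring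
        _ = -(u : ℚ) * t0 := by rw [ht0]

/-- The periodic approximating point. -/
noncomputable def W (P : ℕ → ℕ) (q N E J : ℕ) (b : ℤ) (n : ℕ) : ℂ :=
  Complex.exp (((2 * Real.pi * ((θf P q N E J b n : ℚ) : ℝ) : ℝ) : ℂ) * Complex.I)

lemma W_abs (P : ℕ → ℕ) (q N E J : ℕ) (b : ℤ) (n : ℕ) :
    ‖W P q N E J b n‖ = 1 :=
  Complex.norm_exp_ofReal_mul_I _

lemma W_rel_aux (P : ℕ → ℕ) (q N E J : ℕ) (b : ℤ) (p n : ℕ) (t : ℤ)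
    (h : (p : ℚ) * θf P q N E J b (n+1) - θf P q N E J b n = t) :
    W P q N E J b n = W P q N E J b (n+1) ^ p := by
  have h1 : W P q N E J b (n+1) ^ p
      = Complex.exp (Complex.ofReal ((p : ℝ) * (2 * Real.pi * ((θf P q N E J b (n+1) : ℚ) : ℝ)))
          * Complex.I) := by
    rw [W, ← Complex.exp_nat_mul]
    congr 1
    push_cast
    ring
  rw [h1, W]
  apply exp_eq_of_sub_eq _ _ (-t)
  have hR : (p : ℝ) * ((θf P q N E J b (n+1) : ℚ) : ℝ) - ((θf P q N E J b n : ℚ) : ℝ)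
      = (t : ℝ) := by exact_mod_cast h
  push_cast
  linear_combination (-(2 * Real.pi)) * hR

lemma W_pow_self (P : ℕ → ℕ) (q N E J : ℕ) (b : ℤ) (K n : ℕ) (t : ℤ)
    (h : ((K : ℚ) - 1) * θf P q N E J b n = t) :
    W P q N E J b n ^ K = W P q N E J b n := by
  have h1 : W P q N E J b n ^ K
      = Complex.exp (Complex.ofReal ((K : ℝ) * (2 * Real.pi * ((θf P q N E J b n : ℚ) : ℝ)))
          * Complex.I) := by
    rw [W, ← Complex.exp_nat_mul]
    congr 1
    push_cast
    ring
  rw [h1, W]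
  apply exp_eq_of_sub_eq _ _ t
  have hR : ((K : ℝ) - 1) * ((θf P q N E J b n : ℚ) : ℝ) = (t : ℝ) := by exact_mod_cast h
  push_cast
  linear_combination (2 * Real.pi) * hR

end Sol16

/-- If `S(P)` is nonempty and finite and some `q ∈ S(P)` does not divide `k ≥ 2`,
then the periodic points of the coordinatewise `k`-th power map are dense. -/
theorem stmt_16 (P : ℕ → ℕ) (hP : ∀ n, (P n).Prime) (k : ℕ) (hk : 2 ≤ k)
    (hfin : {q : ℕ | q.Prime ∧ {n | P n = q}.Finite}.Finite)
    (hne : {q : ℕ | q.Prime ∧ {n | P n = q}.Finite}.Nonempty)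
    (hq : ∃ q ∈ {q : ℕ | q.Prime ∧ {n | P n = q}.Finite}, ¬ q ∣ k) :
    Dense {z : Solenoid P | ∃ m : ℕ, 1 ≤ m ∧
      (hpow k)^[m] (z : ℕ → ℂ) = (z : ℕ → ℂ)} := by
  open Sol16 in
  classical
  obtain ⟨q, ⟨hqp, hqfin⟩, hqk⟩ := hq
  rw [dense_iff_inter_open]
  intro U hU hUne
  obtain ⟨x, hxU⟩ := hUne
  obtain ⟨V, hV, rfl⟩ := isOpen_induced_iff.mp hU
  obtain ⟨hz1, hz2⟩ := x.2
  have hVmem : V ∈ nhds (x : ℕ → ℂ) := hV.mem_nhds hxU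
  rw [nhds_pi, Filter.mem_pi] at hVmem
  obtain ⟨I, hIfin, tt, htt, httV⟩ := hVmem
  choose εf hεf hball using fun i => Metric.mem_nhds_iff.mp (htt i)
  set F := hIfin.toFinset with hF
  set N := F.sup id + 1 with hNdef
  have hFN : ∀ i ∈ F, i < N := fun i hi => Nat.lt_succ_of_le (Finset.le_sup (f := id) hi)
  obtain ⟨ε, hε, hεle⟩ : ∃ ε > 0, ∀ i ∈ F, ε ≤ εf i := by
    refine ⟨(insert (1:ℝ) (F.image εf)).min' ⟨1, by simp⟩, ?_, ?_⟩
    · rcases Finset.mem_insert.mp ((insert (1:ℝ) (F.image εf)).min'_mem ⟨1, by simp⟩) with h | h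
      · rw [h]; norm_num
      · obtain ⟨i, hi, hie⟩ := Finset.mem_image.mp h
        rw [← hie]; exact hεf i
    · intro i hi
      exact Finset.min'_le _ _ (Finset.mem_insert_of_mem (Finset.mem_image_of_mem _ hi))
  set MB := ∏ j ∈ Finset.range N, P j with hMBdef
  have hMle : ∀ i, (∏ j ∈ Finset.Ico i N, P j) ≤ MB := by
    intro i
    apply Finset.prod_le_prod_of_subset_of_one_le'
    · intro j hj
      simp only [Finset.mem_Ico] at hj
      simp only [Finset.mem_range]
      omega
    · intro j _ _
      exact (hP j).one_lt.le.trans' (by norm_num)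
  set δ := ε / (MB + 1) with hδdef
  have hδ : 0 < δ := by
    apply div_pos hε
    positivity
  have hq1 : (1:ℝ) < q := by exact_mod_cast hqp.one_lt
  obtain ⟨J, hJ⟩ := pow_unbounded_of_one_lt (2 * Real.pi / δ + Real.pi) hq1
  set c := hqfin.toFinset.card with hcdef
  set E := Nat.totient (q ^ (J + c)) with hEdef
  have hE1 : 1 ≤ E := Nat.totient_pos.mpr (pow_pos hqp.pos _)
  set φ := ((x : ℕ → ℂ) N).arg with hφdef
  set b := round ((q:ℝ) ^ J * φ / (2 * Real.pi)) with hbdef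
  have hc : ∀ i, Sol16.dc P q N i ≤ c := fun i => Sol16.dc_le hqfin i
  -- the approximating point
  set w : ℕ → ℂ := Sol16.W P q N E J b with hwdef
  have hrel : ∀ n, w n = w (n+1) ^ P n := by
    intro n
    obtain ⟨t, ht⟩ := Sol16.θf_rel (b := b) hP hqp hEdef hE1 hc n
    exact Sol16.W_rel_aux P q N E J b (P n) n t ht
  have hwSol : w ∈ Solenoid P := ⟨fun n => Sol16.W_abs P q N E J b n, hrel⟩
  -- periodicity
  have hkco : (k).Coprime (q ^ (J + c)) :=
    Nat.Coprime.pow_right _ (Nat.coprime_comm.mp ((Nat.Prime.coprime_iff_not_dvd hqp).mpr hqk))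
  have heuler : k ^ E ≡ 1 [MOD q ^ (J + c)] := by
    rw [hEdef]; exact Nat.ModEq.pow_totient hkco
  obtain ⟨u, hu⟩ := (Nat.modEq_iff_dvd).mp heuler
  have hper : ∀ n, w n ^ (k ^ E) = w n := by
    intro n
    obtain ⟨t0, ht0⟩ := Sol16.θf_int (E := E) (J := J) (b := b) hqp.two_le hc n
    apply Sol16.W_pow_self P q N E J b (k ^ E) n (-u * t0)
    have huQ : (1 : ℚ) - (k : ℚ) ^ E = (q : ℚ) ^ (J + c) * u := by
      have h2 : ((1 : ℤ) - (k : ℤ) ^ E) = ((q : ℤ) ^ (J + c)) * u := by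
        push_cast at hu ⊢
        linarith
      exact_mod_cast congrArg (fun y : ℤ => (y : ℚ)) h2
    push_cast
    linear_combination (-(θf P q N E J b n)) * huQ + (-(u : ℚ)) * ht0
  -- distance estimate at coordinate N
  have hzN : (x : ℕ → ℂ) N = Complex.exp ((φ : ℂ) * Complex.I) := by
    conv_lhs => rw [← Complex.norm_mul_exp_arg_mul_I ((x : ℕ → ℂ) N)]
    rw [hz1 N]
    simp
    rfl
  have hθN : θf P q N E J b N = Sol16.Th P q N E J b 0 := by
    rw [Sol16.θf_eq_of_le (le_refl N)]
    simp
  set r : ℝ := 2 * Real.pi * ((θf P q N E J b N : ℚ) : ℝ) with hrdef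
  have hqJpos : (0:ℝ) < (q:ℝ) ^ J := by positivity
  have hπ := Real.pi_pos
  have hrval : r = 2 * Real.pi * ((b : ℝ) / (q : ℝ) ^ J) := by
    rw [hrdef, hθN]
    congr 1
    show (((b : ℚ) / (q : ℚ) ^ J : ℚ) : ℝ) = _
    push_cast
    ring
  have hrφ : |r - φ| ≤ Real.pi / (q:ℝ) ^ J := by
    have h1 : r - φ = (2 * Real.pi / (q:ℝ) ^ J) * ((b : ℝ) - (q:ℝ) ^ J * φ / (2 * Real.pi)) := by
      rw [hrval]
      field_simp
    rw [h1, abs_mul]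
    have h2 : |(b : ℝ) - (q:ℝ) ^ J * φ / (2 * Real.pi)| ≤ 1 / 2 := by
      rw [hbdef, abs_sub_comm]
      exact abs_sub_round _
    have h3 : |2 * Real.pi / (q:ℝ) ^ J| = 2 * Real.pi / (q:ℝ) ^ J := by
      rw [abs_of_pos]; positivity
    rw [h3]
    calc 2 * Real.pi / (q:ℝ) ^ J * |(b : ℝ) - (q:ℝ) ^ J * φ / (2 * Real.pi)|
        ≤ 2 * Real.pi / (q:ℝ) ^ J * (1 / 2) := by
          apply mul_le_mul_of_nonneg_left h2
          positivity
      _ = Real.pi / (q:ℝ) ^ J := by ring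
  have hJbig : 2 * Real.pi / δ + Real.pi < (q:ℝ) ^ J := hJ
  have hrφ1 : |r - φ| ≤ 1 := by
    have : Real.pi / (q:ℝ) ^ J ≤ 1 := by
      rw [div_le_one hqJpos]
      nlinarith [div_pos (by positivity : (0:ℝ) < 2 * Real.pi) hδ]
    linarith
  have hdistN : ‖w N - (x : ℕ → ℂ) N‖ < δ := by
    have hwN : w N = Complex.exp ((r : ℂ) * Complex.I) := rfl
    have key : w N - (x : ℕ → ℂ) N
        = Complex.exp ((φ : ℂ) * Complex.I) * (Complex.exp (((r - φ : ℝ) : ℂ) * Complex.I) - 1) := by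
      rw [hwN, hzN, mul_sub, mul_one, ← Complex.exp_add]
      congr 2
      push_cast
      ring
    rw [key, norm_mul, Complex.norm_exp_ofReal_mul_I, one_mul]
    have habsI : ‖((r - φ : ℝ) : ℂ) * Complex.I‖ = |r - φ| := by
      rw [norm_mul, Complex.norm_I, Complex.norm_real, Real.norm_eq_abs, mul_one]
    have h4 : ‖Complex.exp (((r - φ : ℝ) : ℂ) * Complex.I) - 1‖
        ≤ 2 * ‖((r - φ : ℝ) : ℂ) * Complex.I‖ := by
      apply Complex.norm_exp_sub_one_le
      rw [habsI]
      exact hrφ1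
    rw [habsI] at h4
    have h5 : 2 * |r - φ| < δ := by
      have h6 : 2 * (Real.pi / (q:ℝ) ^ J) < δ := by
        rw [show 2 * (Real.pi / (q:ℝ) ^ J) = 2 * Real.pi / (q:ℝ) ^ J by ring,
          div_lt_iff₀ hqJpos]
        have h7 : 2 * Real.pi / δ < (q:ℝ) ^ J := by linarith
        rw [div_lt_iff₀ hδ] at h7
        linarith
      linarith
    linarith
  -- distance estimate at all coordinates i ∈ F
  have hmem : ∀ i ∈ F, w i ∈ tt i := by
    intro i hi
    have hiN : i < N := hFN i hi
    have hwi : w i = w N ^ (∏ j ∈ Finset.Ico i N, P j) := Sol16.sol_pow hrel i N hiN.le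
    have hzi : (x : ℕ → ℂ) i = (x : ℕ → ℂ) N ^ (∏ j ∈ Finset.Ico i N, P j) :=
      Sol16.sol_pow hz2 i N hiN.le
    have hest : ‖w i - (x : ℕ → ℂ) i‖
        ≤ (∏ j ∈ Finset.Ico i N, P j) * ‖w N - (x : ℕ → ℂ) N‖ := by
      rw [hwi, hzi]
      exact Sol16.abs_pow_sub_pow_le _ _ (Sol16.W_abs P q N E J b N) (hz1 N) _
    have hest2 : ‖w i - (x : ℕ → ℂ) i‖ < εf i := by
      have hMB : ((∏ j ∈ Finset.Ico i N, P j : ℕ) : ℝ) ≤ (MB : ℝ) := by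
        exact_mod_cast hMle i
      have habs0 : (0:ℝ) ≤ ‖w N - (x : ℕ → ℂ) N‖ := norm_nonneg _
      have h8 : ((∏ j ∈ Finset.Ico i N, P j : ℕ) : ℝ) * ‖w N - (x : ℕ → ℂ) N‖
          ≤ (MB : ℝ) * δ := by
        apply mul_le_mul hMB hdistN.le habs0
        positivity
      have h9 : (MB : ℝ) * δ < ε := by
        rw [hδdef, mul_comm, div_mul_eq_mul_div,
          div_lt_iff₀ (by positivity : (0:ℝ) < (MB:ℝ) + 1)]
        nlinarith
      have := hεle i hi
      linarith
    apply hball i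
    rw [Metric.mem_ball, Complex.dist_eq]
    exact hest2
  -- conclusion
  refine ⟨⟨w, hwSol⟩, ?_, ?_⟩
  · show w ∈ V
    apply httV
    intro i hi
    exact hmem i (hIfin.mem_toFinset.mpr hi)
  · refine ⟨E, hE1, ?_⟩
    show (hpow k)^[E] w = w
    rw [Sol16.hpow_iter]
    funext n
    exact hper n
end
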